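/- Let $G:[0,\infty)\to(0,1]$ be a non-increasing function, and let $c>1$, $\delta>0$ be constants such that for every $s\geq 0$ one has $G\big(s + c\,G(s)^{-1/\delta}\big) \leq \frac{c}{1+c}\,G(s)$. Then, setting $c_1 = \left(\frac{1+c}{c}\right)^{1/\delta} - 1 > 0$, one has for all $s>0$: $G(s) \leq \left(\frac{c(1+c_1)}{c_1}\right)^{\delta} \frac{1}{s^{\delta}}$. -/

import Mathlib

theorem stmt_0 (G : ℝ → ℝ) (c δ : ℝ) (hc : 1 < c) (hδ : 0 < δ)
    (hGpos : ∀ s : ℝ, 0 ≤ s → 0 < G s) (hGle1 : ∀ s : ℝ, 0 ≤ s → G s ≤ 1)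
    (hmono : ∀ s t : ℝ, 0 ≤ s → s ≤ t → G t ≤ G s)
    (hstep : ∀ s : ℝ, 0 ≤ s →
      G (s + c * (G s) ^ (-(1 / δ)) ) ≤ c / (1 + c) * G s) :
    ∀ s : ℝ, 0 < s →
      G s ≤ (c * (1 + (((1 + c) / c) ^ (1 / δ) - 1)) / (((1 + c) / c) ^ (1 / δ) - 1)) ^ δ
        / s ^ δ := by
  classical
  intro s hs
  have hc0 : (0:ℝ) < c := lt_trans one_pos hc
  have h1c : (0:ℝ) < 1 + c := by linarith
  set q := c / (1 + c) with hq
  have hq0 : 0 < q := div_pos hc0 h1c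
  have hq1 : q < 1 := (div_lt_one h1c).2 (by linarith)
  set κ := ((1 + c) / c) ^ (1 / δ : ℝ) with hκ
  have hδ' : (0:ℝ) < 1 / δ := by positivity
  have hbase : 1 < (1 + c) / c := (one_lt_div hc0).2 (by linarith)
  have hκ1 : 1 < κ := by
    rw [hκ]
    exact (Real.one_lt_rpow_iff_of_pos (by positivity)).2 (Or.inl ⟨hbase, hδ'⟩)
  have hκq : q ^ (-(1 / δ) : ℝ) = κ := by
    rw [Real.rpow_neg hq0.le, ← Real.inv_rpow hq0.le]
    show ((c / (1 + c) : ℝ))⁻¹ ^ (1 / δ : ℝ) = κ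
    rw [inv_div, hκ]
  -- the iteration sequence
  set u : ℕ → ℝ := fun n => Nat.rec (0:ℝ) (fun _ t => t + c * (G t) ^ (-(1 / δ) : ℝ)) n
    with hu
  have hu0 : u 0 = 0 := rfl
  have huS : ∀ n, u (n + 1) = u n + c * (G (u n)) ^ (-(1 / δ) : ℝ) := fun n => rfl
  -- key invariant
  have key : ∀ n, 0 ≤ u n ∧ u n ≤ c / (κ - 1) * (G (u n)) ^ (-(1 / δ) : ℝ) := by
    intro n
    induction n with
    | zero =>
        refine ⟨le_rfl, ?_⟩
        rw [hu0]
        exact mul_nonneg (div_nonneg hc0.le (by linarith)) (Real.rpow_nonneg (hGpos 0 le_rfl).le _)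
    | succ n ih =>
        obtain ⟨hn0, hnb⟩ := ih
        have hGn : 0 < G (u n) := hGpos _ hn0
        have hX : 0 < (G (u n)) ^ (-(1 / δ) : ℝ) := Real.rpow_pos_of_pos hGn _
        have hpos : 0 ≤ u (n + 1) := by
          rw [huS]; nlinarith
        refine ⟨hpos, ?_⟩
        have hdec : G (u (n + 1)) ≤ q * G (u n) := by
          rw [huS]; exact hstep (u n) hn0
        have hanti : (q * G (u n)) ^ (-(1 / δ) : ℝ) ≤ (G (u (n + 1))) ^ (-(1 / δ) : ℝ) :=
          Real.rpow_le_rpow_of_nonpos (hGpos _ hpos) hdec (neg_nonpos.mpr hδ'.le)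
        have hsplit : (q * G (u n)) ^ (-(1 / δ) : ℝ) = κ * (G (u n)) ^ (-(1 / δ) : ℝ) := by
          rw [Real.mul_rpow hq0.le hGn.le, hκq]
        have halg : c / (κ - 1) * (G (u n)) ^ (-(1 / δ) : ℝ) + c * (G (u n)) ^ (-(1 / δ) : ℝ)
            = c / (κ - 1) * (κ * (G (u n)) ^ (-(1 / δ) : ℝ)) := by
          have hκne : κ - 1 ≠ 0 := by linarith
          field_simp
          ring
        calc u (n + 1) = u n + c * (G (u n)) ^ (-(1 / δ) : ℝ) := huS n
          _ ≤ c / (κ - 1) * (G (u n)) ^ (-(1 / δ) : ℝ) + c * (G (u n)) ^ (-(1 / δ) : ℝ) := by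
              linarith
          _ = c / (κ - 1) * (κ * (G (u n)) ^ (-(1 / δ) : ℝ)) := halg
          _ = c / (κ - 1) * ((q * G (u n)) ^ (-(1 / δ) : ℝ)) := by rw [hsplit]
          _ ≤ c / (κ - 1) * (G (u (n + 1))) ^ (-(1 / δ) : ℝ) := by
              have : (0:ℝ) ≤ c / (κ - 1) := by
                apply div_nonneg hc0.le; linarith
              exact mul_le_mul_of_nonneg_left hanti this
  -- growth
  have hgrow : ∀ n : ℕ, c * n ≤ u n := by
    intro n
    induction n with
    | zero => simp [hu0]
    | succ n ih =>
        have hn0 := (key n).1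
        have hGn : 0 < G (u n) := hGpos _ hn0
        have hX : 1 ≤ (G (u n)) ^ (-(1 / δ) : ℝ) :=
          Real.one_le_rpow_of_pos_of_le_one_of_nonpos hGn (hGle1 _ hn0) (neg_nonpos.mpr hδ'.le)
        have : c * 1 ≤ c * (G (u n)) ^ (-(1 / δ) : ℝ) :=
          mul_le_mul_of_nonneg_left hX hc0.le
        rw [huS]
        push_cast
        nlinarith
  -- find the last index below s
  have hex : ∃ n : ℕ, s < u n := by
    obtain ⟨n, hn⟩ := exists_nat_gt (s / c)
    refine ⟨n, lt_of_lt_of_le ?_ (hgrow n)⟩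
    rw [div_lt_iff₀ hc0] at hn
    linarith [hn]
  set N := Nat.find hex with hN
  have hN1 : s < u N := Nat.find_spec hex
  have hNpos : N ≠ 0 := by
    intro h
    rw [h, hu0] at hN1
    linarith
  obtain ⟨m, hm⟩ := Nat.exists_eq_succ_of_ne_zero hNpos
  have hum : u m ≤ s := by
    have := Nat.find_min hex (by omega : m < N)
    push_neg at this
    exact this
  -- conclude
  obtain ⟨hm0, hmb⟩ := key m
  have hGm : 0 < G (u m) := hGpos _ hm0
  set X : ℝ := (G (u m)) ^ (-(1 / δ) : ℝ) with hX
  have hXpos : 0 < X := Real.rpow_pos_of_pos hGm _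
  set A : ℝ := c * κ / (κ - 1) with hA
  have hApos : 0 < A := by
    apply div_pos (by positivity); linarith
  have hsA : s < A * X := by
    have h1 : s < u (m + 1) := by rw [Nat.succ_eq_add_one] at hm; rw [← hm]; exact hN1
    have h2 : u (m + 1) = u m + c * X := huS m
    have h3 : c / (κ - 1) * X + c * X = A * X := by
      have hκne : κ - 1 ≠ 0 := by linarith
      field_simp [hA]
      rw [hA]; field_simp; ring
    calc s < u (m + 1) := h1
      _ = u m + c * X := h2
      _ ≤ c / (κ - 1) * X + c * X := by linarith
      _ = A * X := h3
  -- turn into the power bound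
  have hXδ : X ^ δ = (G (u m))⁻¹ := by
    rw [hX, ← Real.rpow_mul hGm.le]
    rw [show -(1 / δ) * δ = (-1 : ℝ) by field_simp]
    exact Real.rpow_neg_one _
  have hfin : G (u m) ≤ A ^ δ / s ^ δ := by
    have h1 : s ^ δ < (A * X) ^ δ := Real.rpow_lt_rpow hs.le hsA hδ
    rw [Real.mul_rpow hApos.le hXpos.le, hXδ] at h1
    have hsδ : (0:ℝ) < s ^ δ := Real.rpow_pos_of_pos hs _
    have h2 : G (u m) * s ^ δ < A ^ δ := by
      calc G (u m) * s ^ δ < G (u m) * (A ^ δ * (G (u m))⁻¹) :=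
            mul_lt_mul_of_pos_left h1 hGm
        _ = A ^ δ := by field_simp
    rw [le_div_iff₀ hsδ]
    linarith
  have hconst : c * (1 + (κ - 1)) / (κ - 1) = A := by rw [hA]; ring_nf
  rw [hconst]
  calc G s ≤ G (u m) := hmono (u m) s hm0 hum
    _ ≤ A ^ δ / s ^ δ := hfin
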